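/- Let C be a finite EI-category with exactly two non-isomorphic objects x and y, G = Aut(x) and H = Aut(y) nonabelian finite groups whose orders are invertible in an algebraically closed field k, and suppose G × H acts freely on Hom_C(x,y), which is nonempty. Fix a simple kG-module M and a simple kH-module N, each of dimension at least 2, and a morphism f₀ ∈ Hom_C(x,y). For λ ∈ kˣ define the representation V_λ of C with V_λ(x) = M, V_λ(y) = N, group elements acting via the module structures, and every morphism h∘f₀∘g acting as the linear map ρ_N(h)·A_λ·ρ_M(g), where in fixed bases A_λ is the matrix with (1,1)-entry 1, (2,1)-entry λ, and all other entries 0. Then each V_λ is an indecomposable representation of C and V_λ ≅ V_μ implies λ = μ. -/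

import Mathlib

open CategoryTheory

/-- A representation of `C` (functor `C ⥤ Vect_k`) is indecomposable if it is nonzero
and its only idempotent endomorphisms are `0` and `1`. -/
def IndecRep (k C : Type) [Field k] [Category.{0} C] (V : C ⥤ ModuleCat.{0} k) : Prop :=
  (∃ x : C, Nontrivial (V.obj x)) ∧
    ∀ e : V ⟶ V, e ≫ e = e → e = 0 ∨ e = 𝟙 V

/-- The linear map `A_λ : M → N` that, in the fixed bases `bM`, `bN`, is given by the
matrix with `(1,1)`-entry `1`, `(2,1)`-entry `λ`, and all other entries `0`. -/
noncomputable def Amat (k M N : Type) [Field k] [AddCommGroup M] [Module k M]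
    [AddCommGroup N] [Module k N] {dM dN : ℕ}
    (bM : Module.Basis (Fin dM) k M) (bN : Module.Basis (Fin dN) k N) (lam : k) : M →ₗ[k] N :=
  Matrix.toLin bM bN (Matrix.of fun i j =>
    if (j : ℕ) = 0 then (if (i : ℕ) = 0 then 1 else if (i : ℕ) = 1 then lam else 0)
    else 0)

/-- `VSpec` records that a representation `V : C ⥤ Vect_k` is the representation `V_λ`:
`V(x) = M` with `Aut(x)` acting by `ρM`, `V(y) = N` with `Aut(y)` acting by `ρN`, and
each morphism `h ∘ f₀ ∘ g : x ⟶ y` acting as `ρN(h) ∘ A ∘ ρM(g)`. -/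
def VSpec (k C : Type) [Field k] [Category.{0} C] {x y : C} (f₀ : x ⟶ y)
    (M N : Type) [AddCommGroup M] [Module k M] [AddCommGroup N] [Module k N]
    (ρM : Representation k (Aut x) M) (ρN : Representation k (Aut y) N)
    (A : M →ₗ[k] N) (V : C ⥤ ModuleCat.{0} k) : Prop :=
  ∃ (ex : V.obj x ≅ ModuleCat.of k M) (ey : V.obj y ≅ ModuleCat.of k N),
    (∀ g : Aut x, V.map g.hom ≫ ex.hom = ex.hom ≫ ModuleCat.ofHom (ρM g)) ∧
    (∀ h : Aut y, V.map h.hom ≫ ey.hom = ey.hom ≫ ModuleCat.ofHom (ρN h)) ∧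
    (∀ (g : Aut x) (h : Aut y),
      V.map (g.hom ≫ f₀ ≫ h.hom) ≫ ey.hom =
        ex.hom ≫ ModuleCat.ofHom ((ρN h).comp (A.comp (ρM g))))

/-! ### Auxiliary lemmas -/

/-- Schur's lemma: a `k`-linear endomorphism commuting with a simple representation
of a group over an algebraically closed field is scalar. -/
lemma schur_scalar {k G M : Type} [Field k] [IsAlgClosed k] [Group G]
    [AddCommGroup M] [Module k M] {dM : ℕ} (bM : Module.Basis (Fin dM) k M) (hdM : 1 ≤ dM)
    (ρ : Representation k G M)
    (hsimple : IsSimpleModule (MonoidAlgebra k G) ρ.asModule)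
    (φ : M →ₗ[k] M) (hφ : ∀ g : G, φ ∘ₗ (ρ g : M →ₗ[k] M) = (ρ g : M →ₗ[k] M) ∘ₗ φ) :
    ∃ c : k, φ = c • LinearMap.id := by
  have : FiniteDimensional k M := Module.Finite.of_basis bM
  have : Nontrivial M := by
    refine nontrivial_of_ne (bM ⟨0, by omega⟩) 0 (bM.ne_zero _)
  obtain ⟨c, hc⟩ := Module.End.exists_eigenvalue (φ : Module.End k M)
  obtain ⟨v, hv⟩ := hc.exists_hasEigenvector
  have hcomm : ∀ r : MonoidAlgebra k G, φ ∘ₗ ρ.asAlgebraHom r = ρ.asAlgebraHom r ∘ₗ φ := by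
    intro r
    induction r using MonoidAlgebra.induction_on with
    | of g => simpa [Representation.asAlgebraHom_of] using hφ g
    | add f g hf hg => simp only [map_add]; rw [LinearMap.comp_add, LinearMap.add_comp, hf, hg]
    | smul r f hf =>
        simp only [map_smul]
        rw [LinearMap.comp_smul, LinearMap.smul_comp, hf]
  set e := ρ.asModuleEquiv
  let p : Submodule (MonoidAlgebra k G) ρ.asModule :=
    { carrier := {m | φ (e m) = c • e m}
      add_mem' := by
        intro a b ha hb; simp only [Set.mem_setOf_eq, map_add, smul_add] at *; rw [ha, hb]
      zero_mem' := by simp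
      smul_mem' := by
        intro r m hm
        simp only [Set.mem_setOf_eq] at hm ⊢
        rw [Representation.asModuleEquiv_map_smul]
        have := congrArg (fun (L : M →ₗ[k] M) => L (e m)) (hcomm r)
        simp only [LinearMap.comp_apply] at this
        rw [this, hm, map_smul] }
  have hne : p ≠ ⊥ := by
    intro h
    have hmem : (e.symm v) ∈ p := by
      simp only [p, Submodule.mem_mk, AddSubmonoid.mem_mk, AddSubsemigroup.mem_mk,
        Set.mem_setOf_eq, AddEquiv.apply_symm_apply]
      exact hv.apply_eq_smul
    rw [h, Submodule.mem_bot] at hmem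
    exact hv.2 (by simpa using congrArg e hmem)
  have htop : p = ⊤ := (hsimple.1.eq_bot_or_eq_top p).resolve_left hne
  refine ⟨c, ?_⟩
  ext m
  have hmem : (e.symm m) ∈ p := htop ▸ Submodule.mem_top
  simpa [p] using hmem

section Glue
variable {k C : Type} [Field k] [Category.{0} C] {x y : C} (f₀ : x ⟶ y)
    {M N : Type} [AddCommGroup M] [Module k M] [AddCommGroup N] [Module k N]
    (ρM : Representation k (Aut x) M) (ρN : Representation k (Aut y) N)
    (A A' : M →ₗ[k] N) {V W : C ⥤ ModuleCat.{0} k}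

lemma map_f0 (exV : V.obj x ≅ ModuleCat.of k M) (eyV : V.obj y ≅ ModuleCat.of k N)
    (hVf : ∀ (g : Aut x) (h : Aut y),
      V.map (g.hom ≫ f₀ ≫ h.hom) ≫ eyV.hom =
        exV.hom ≫ ModuleCat.ofHom ((ρN h).comp (A.comp (ρM g)))) :
    V.map f₀ ≫ eyV.hom = exV.hom ≫ ModuleCat.ofHom A := by
  have := hVf 1 1
  have h1 : (1 : Aut x).hom = 𝟙 x := rfl
  have h2 : (1 : Aut y).hom = 𝟙 y := rfl
  rw [h1, h2, Category.id_comp, Category.comp_id, map_one, map_one] at this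
  exact this

lemma map_aut (exV : V.obj x ≅ ModuleCat.of k M)
    (hVg : ∀ g : Aut x, V.map g.hom ≫ exV.hom = exV.hom ≫ ModuleCat.ofHom (ρM g))
    (g : Aut x) :
    V.map g.hom = exV.hom ≫ ModuleCat.ofHom (ρM g) ≫ exV.inv := by
  rw [← Category.assoc, ← hVg g, Category.assoc, exV.hom_inv_id, Category.comp_id]

lemma components (exV : V.obj x ≅ ModuleCat.of k M) (eyV : V.obj y ≅ ModuleCat.of k N)
    (exW : W.obj x ≅ ModuleCat.of k M) (eyW : W.obj y ≅ ModuleCat.of k N)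
    (hVg : ∀ g : Aut x, V.map g.hom ≫ exV.hom = exV.hom ≫ ModuleCat.ofHom (ρM g))
    (hVh : ∀ h : Aut y, V.map h.hom ≫ eyV.hom = eyV.hom ≫ ModuleCat.ofHom (ρN h))
    (hVf : ∀ (g : Aut x) (h : Aut y),
      V.map (g.hom ≫ f₀ ≫ h.hom) ≫ eyV.hom =
        exV.hom ≫ ModuleCat.ofHom ((ρN h).comp (A.comp (ρM g))))
    (hWg : ∀ g : Aut x, W.map g.hom ≫ exW.hom = exW.hom ≫ ModuleCat.ofHom (ρM g))
    (hWh : ∀ h : Aut y, W.map h.hom ≫ eyW.hom = eyW.hom ≫ ModuleCat.ofHom (ρN h))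
    (hWf : ∀ (g : Aut x) (h : Aut y),
      W.map (g.hom ≫ f₀ ≫ h.hom) ≫ eyW.hom =
        exW.hom ≫ ModuleCat.ofHom ((ρN h).comp (A'.comp (ρM g))))
    (η : V ⟶ W) :
    (∀ g : Aut x, ModuleCat.ofHom (ρM g) ≫ (exV.inv ≫ η.app x ≫ exW.hom) =
      (exV.inv ≫ η.app x ≫ exW.hom) ≫ ModuleCat.ofHom (ρM g)) ∧
    (∀ h : Aut y, ModuleCat.ofHom (ρN h) ≫ (eyV.inv ≫ η.app y ≫ eyW.hom) =
      (eyV.inv ≫ η.app y ≫ eyW.hom) ≫ ModuleCat.ofHom (ρN h)) ∧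
    ((exV.inv ≫ η.app x ≫ exW.hom) ≫ ModuleCat.ofHom A' =
      ModuleCat.ofHom A ≫ (eyV.inv ≫ η.app y ≫ eyW.hom)) := by
  refine ⟨fun g => ?_, fun h => ?_, ?_⟩
  · have nat := η.naturality g.hom
    rw [map_aut ρM exV hVg g, map_aut ρM exW hWg g] at nat
    calc ModuleCat.ofHom (ρM g) ≫ exV.inv ≫ η.app x ≫ exW.hom
        = exV.inv ≫ (exV.hom ≫ ModuleCat.ofHom (ρM g) ≫ exV.inv) ≫ η.app x ≫ exW.hom := by
          simp
      _ = exV.inv ≫ η.app x ≫ (exW.hom ≫ ModuleCat.ofHom (ρM g) ≫ exW.inv) ≫ exW.hom := by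
          simp only [Category.assoc] at nat ⊢; rw [reassoc_of% nat]
      _ = (exV.inv ≫ η.app x ≫ exW.hom) ≫ ModuleCat.ofHom (ρM g) := by simp
  · have nat := η.naturality h.hom
    rw [map_aut ρN eyV hVh h, map_aut ρN eyW hWh h] at nat
    calc ModuleCat.ofHom (ρN h) ≫ eyV.inv ≫ η.app y ≫ eyW.hom
        = eyV.inv ≫ (eyV.hom ≫ ModuleCat.ofHom (ρN h) ≫ eyV.inv) ≫ η.app y ≫ eyW.hom := by
          simp
      _ = eyV.inv ≫ η.app y ≫ (eyW.hom ≫ ModuleCat.ofHom (ρN h) ≫ eyW.inv) ≫ eyW.hom := by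
          simp only [Category.assoc] at nat ⊢; rw [reassoc_of% nat]
      _ = (eyV.inv ≫ η.app y ≫ eyW.hom) ≫ ModuleCat.ofHom (ρN h) := by simp
  · have nat := η.naturality f₀
    have hV0 : V.map f₀ = exV.hom ≫ ModuleCat.ofHom A ≫ eyV.inv := by
      rw [← Category.assoc, ← map_f0 f₀ ρM ρN A exV eyV hVf, Category.assoc,
        eyV.hom_inv_id, Category.comp_id]
    have hW0 : W.map f₀ = exW.hom ≫ ModuleCat.ofHom A' ≫ eyW.inv := by
      rw [← Category.assoc, ← map_f0 f₀ ρM ρN A' exW eyW hWf, Category.assoc,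
        eyW.hom_inv_id, Category.comp_id]
    rw [hV0, hW0] at nat
    calc (exV.inv ≫ η.app x ≫ exW.hom) ≫ ModuleCat.ofHom A'
        = exV.inv ≫ (η.app x ≫ (exW.hom ≫ ModuleCat.ofHom A' ≫ eyW.inv)) ≫ eyW.hom := by
          simp
      _ = exV.inv ≫ ((exV.hom ≫ ModuleCat.ofHom A ≫ eyV.inv) ≫ η.app y) ≫ eyW.hom := by
          rw [← nat]
      _ = ModuleCat.ofHom A ≫ (eyV.inv ≫ η.app y ≫ eyW.hom) := by simp

lemma scalar_components [IsAlgClosed k] {dM dN : ℕ}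
    (bM : Module.Basis (Fin dM) k M) (bN : Module.Basis (Fin dN) k N) (hdM : 1 ≤ dM) (hdN : 1 ≤ dN)
    (hMsimple : IsSimpleModule (MonoidAlgebra k (Aut x)) ρM.asModule)
    (hNsimple : IsSimpleModule (MonoidAlgebra k (Aut y)) ρN.asModule)
    (exV : V.obj x ≅ ModuleCat.of k M) (eyV : V.obj y ≅ ModuleCat.of k N)
    (exW : W.obj x ≅ ModuleCat.of k M) (eyW : W.obj y ≅ ModuleCat.of k N)
    (hVg : ∀ g : Aut x, V.map g.hom ≫ exV.hom = exV.hom ≫ ModuleCat.ofHom (ρM g))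
    (hVh : ∀ h : Aut y, V.map h.hom ≫ eyV.hom = eyV.hom ≫ ModuleCat.ofHom (ρN h))
    (hVf : ∀ (g : Aut x) (h : Aut y),
      V.map (g.hom ≫ f₀ ≫ h.hom) ≫ eyV.hom =
        exV.hom ≫ ModuleCat.ofHom ((ρN h).comp (A.comp (ρM g))))
    (hWg : ∀ g : Aut x, W.map g.hom ≫ exW.hom = exW.hom ≫ ModuleCat.ofHom (ρM g))
    (hWh : ∀ h : Aut y, W.map h.hom ≫ eyW.hom = eyW.hom ≫ ModuleCat.ofHom (ρN h))
    (hWf : ∀ (g : Aut x) (h : Aut y),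
      W.map (g.hom ≫ f₀ ≫ h.hom) ≫ eyW.hom =
        exW.hom ≫ ModuleCat.ofHom ((ρN h).comp (A'.comp (ρM g))))
    (η : V ⟶ W) :
    ∃ c d : k,
      exV.inv ≫ η.app x ≫ exW.hom = ModuleCat.ofHom (c • (LinearMap.id : M →ₗ[k] M)) ∧
      eyV.inv ≫ η.app y ≫ eyW.hom = ModuleCat.ofHom (d • (LinearMap.id : N →ₗ[k] N)) ∧
      c • A' = d • A := by
  obtain ⟨hcomm1, hcomm2, hcomm3⟩ :=
    components f₀ ρM ρN A A' exV eyV exW eyW hVg hVh hVf hWg hWh hWf η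
  have φ : M →ₗ[k] M := (exV.inv ≫ η.app x ≫ exW.hom).hom
  obtain ⟨c, hc⟩ := schur_scalar bM hdM ρM hMsimple (exV.inv ≫ η.app x ≫ exW.hom).hom
    (fun g => congrArg ModuleCat.Hom.hom (hcomm1 g))
  replace hc := ModuleCat.hom_ext (f := exV.inv ≫ η.app x ≫ exW.hom)
    (g := ModuleCat.ofHom (c • (LinearMap.id : M →ₗ[k] M))) hc
  obtain ⟨d, hd⟩ := schur_scalar bN hdN ρN hNsimple (eyV.inv ≫ η.app y ≫ eyW.hom).hom
    (fun h => congrArg ModuleCat.Hom.hom (hcomm2 h))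
  replace hd := ModuleCat.hom_ext (f := eyV.inv ≫ η.app y ≫ eyW.hom)
    (g := ModuleCat.ofHom (d • (LinearMap.id : N →ₗ[k] N))) hd
  refine ⟨c, d, hc, hd, ?_⟩
  rw [show exV.inv ≫ η.app x ≫ exW.hom =
      ModuleCat.ofHom (c • (LinearMap.id : M →ₗ[k] M)) from hc,
    show eyV.inv ≫ η.app y ≫ eyW.hom =
      ModuleCat.ofHom (d • (LinearMap.id : N →ₗ[k] N)) from hd] at hcomm3
  ext m
  have h := LinearMap.congr_fun
    (show A' ∘ₗ (c • (LinearMap.id : M →ₗ[k] M)) =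
      (d • (LinearMap.id : N →ₗ[k] N)) ∘ₗ A from congrArg ModuleCat.Hom.hom hcomm3) m
  simp only [LinearMap.comp_apply, LinearMap.smul_apply, LinearMap.id_apply, map_smul] at h
  simpa using h

end Glue

lemma Amat_repr {k M N : Type} [Field k] [AddCommGroup M] [Module k M]
    [AddCommGroup N] [Module k N] {dM dN : ℕ}
    (bM : Module.Basis (Fin dM) k M) (bN : Module.Basis (Fin dN) k N) (hdM : 0 < dM)
    (t : k) (i : Fin dN) :
    bN.repr ((Amat k M N bM bN t) (bM ⟨0, hdM⟩)) i =
      (if (i : ℕ) = 0 then 1 else if (i : ℕ) = 1 then t else 0) := by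
  rw [Amat, Matrix.toLin_self, map_sum, Finsupp.finset_sum_apply]
  have key : ∀ x : Fin dN,
      (bN.repr ((Matrix.of fun (i : Fin dN) (j : Fin dM) => if (j : ℕ) = 0 then
        (if (i : ℕ) = 0 then 1 else if (i : ℕ) = 1 then t else 0) else 0) x ⟨0, hdM⟩ • bN x)) i
      = if x = i then (if (x : ℕ) = 0 then 1 else if (x : ℕ) = 1 then t else 0) else 0 := by
    intro x
    simp only [Matrix.of_apply]
    split_ifs <;> simp_all [Module.Basis.repr_self, Finsupp.single_apply]
  rw [Finset.sum_congr rfl fun x _ => key x, Finset.sum_ite_eq' Finset.univ i]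
  simp

theorem stmt_17 (k C : Type) [Field k] [IsAlgClosed k] [Category.{0} C] [Fintype C]
    [∀ a b : C, Fintype (a ⟶ b)]
    (hEI : ∀ (c : C) (f : c ⟶ c), IsIso f)
    (x y : C) (hxy : ¬ Nonempty (x ≅ y))
    (hobj : ∀ z : C, Nonempty (z ≅ x) ∨ Nonempty (z ≅ y))
    (hGna : ∃ a b : Aut x, a * b ≠ b * a) (hHna : ∃ a b : Aut y, a * b ≠ b * a)
    (hGk : (Nat.card (Aut x) : k) ≠ 0) (hHk : (Nat.card (Aut y) : k) ≠ 0)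
    (hfree : ∀ (g : Aut x) (h : Aut y) (f : x ⟶ y),
      g.inv ≫ f ≫ h.hom = f → g = 1 ∧ h = 1)
    (f₀ : x ⟶ y)
    (M N : Type) [AddCommGroup M] [Module k M] [AddCommGroup N] [Module k N]
    {dM dN : ℕ} (bM : Module.Basis (Fin dM) k M) (bN : Module.Basis (Fin dN) k N)
    (hdM : 2 ≤ dM) (hdN : 2 ≤ dN)
    (ρM : Representation k (Aut x) M) (ρN : Representation k (Aut y) N)
    (hMsimple : IsSimpleModule (MonoidAlgebra k (Aut x)) ρM.asModule)
    (hNsimple : IsSimpleModule (MonoidAlgebra k (Aut y)) ρN.asModule) :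
    ∀ (lam mu : kˣ) (V W : C ⥤ ModuleCat.{0} k),
      VSpec k C f₀ M N ρM ρN (Amat k M N bM bN (lam : k)) V →
      VSpec k C f₀ M N ρM ρN (Amat k M N bM bN (mu : k)) W →
      IndecRep k C V ∧ (Nonempty (V ≅ W) → lam = mu) := by
  intro lam mu V W hV hW
  obtain ⟨exV, eyV, hVg, hVh, hVf⟩ := hV
  obtain ⟨exW, eyW, hWg, hWh, hWf⟩ := hW
  have hdM0 : 0 < dM := by omega
  have hdN0 : 0 < dN := by omega
  have hdM1 : 1 ≤ dM := by omega
  have hdN1 : 1 ≤ dN := by omega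
  have hbM0 : bM ⟨0, hdM0⟩ ≠ 0 := bM.ne_zero _
  -- coordinate extraction from `c • Amat t' = d • Amat t`
  have coord : ∀ (c d t t' : k), c • Amat k M N bM bN t' = d • Amat k M N bM bN t →
      c = d ∧ c * t' = d * t := by
    intro c d t t' h
    constructor
    · have h0 := congrArg (fun L : M →ₗ[k] N =>
        bN.repr (L (bM ⟨0, hdM0⟩)) ⟨0, hdN0⟩) h
      simp only [LinearMap.smul_apply, map_smul, Finsupp.smul_apply, smul_eq_mul,
        Amat_repr bM bN hdM0] at h0
      simpa using h0
    · have h1 := congrArg (fun L : M →ₗ[k] N =>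
        bN.repr (L (bM ⟨0, hdM0⟩)) ⟨1, by omega⟩) h
      simp only [LinearMap.smul_apply, map_smul, Finsupp.smul_apply, smul_eq_mul,
        Amat_repr bM bN hdM0] at h1
      simpa using h1
  constructor
  · -- indecomposable
    constructor
    · refine ⟨x, nontrivial_of_ne (exV.inv (bM ⟨0, hdM0⟩)) 0 fun h => hbM0 ?_⟩
      have h2 : exV.hom (exV.inv (bM ⟨0, hdM0⟩)) = bM ⟨0, hdM0⟩ :=
        LinearMap.congr_fun (show (exV.hom.hom : (V.obj x : Type) →ₗ[k] M) ∘ₗ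
          (exV.inv.hom : M →ₗ[k] (V.obj x : Type)) = LinearMap.id from
            congrArg ModuleCat.Hom.hom exV.inv_hom_id) _
      rw [← h2, h, map_zero]
    · intro e he
      obtain ⟨c, d, hcx, hdy, hcd⟩ := scalar_components f₀ ρM ρN
        (Amat k M N bM bN (lam : k)) (Amat k M N bM bN (lam : k)) bM bN hdM1 hdN1
        hMsimple hNsimple exV eyV exV eyV hVg hVh hVf hVg hVh hVf e
      obtain ⟨hc_eq_d, -⟩ := coord c d (lam : k) (lam : k) hcd
      -- recover components of `e`
      have happx : e.app x = exV.hom ≫ ModuleCat.ofHom (c • (LinearMap.id : M →ₗ[k] M))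
          ≫ exV.inv := by rw [← hcx]; simp
      have happy : e.app y = eyV.hom ≫ ModuleCat.ofHom (d • (LinearMap.id : N →ₗ[k] N))
          ≫ eyV.inv := by rw [← hdy]; simp
      -- idempotency gives c * c = c
      have hidem : c * c = c := by
        have h1 := congrArg (fun t : V ⟶ V => t.app x) he
        simp only [NatTrans.comp_app] at h1
        rw [happx] at h1
        have h2 : ModuleCat.ofHom (c • (LinearMap.id : M →ₗ[k] M)) ≫
            ModuleCat.ofHom (c • (LinearMap.id : M →ₗ[k] M)) =
            ModuleCat.ofHom (c • (LinearMap.id : M →ₗ[k] M)) := by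
          have h3 := congrArg (fun t => exV.inv ≫ t ≫ exV.hom) h1
          simpa using h3
        have h4 : ((c • LinearMap.id : M →ₗ[k] M) ∘ₗ (c • LinearMap.id))
            = (c • LinearMap.id : M →ₗ[k] M) := congrArg ModuleCat.Hom.hom h2
        have h5 := LinearMap.congr_fun h4 (bM ⟨0, hdM0⟩)
        simp only [LinearMap.comp_apply, LinearMap.smul_apply, LinearMap.id_apply,
          map_smul, smul_smul] at h5
        have h6 : (c * c - c) • bM ⟨0, hdM0⟩ = 0 := by rw [sub_smul, h5, sub_self]
        rcases smul_eq_zero.mp h6 with h | h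
        · exact sub_eq_zero.mp h
        · exact absurd h hbM0
      have hc01 : c = 0 ∨ c = 1 := by
        have hfac : c * (c - 1) = 0 := by ring_nf; linear_combination hidem
        rcases mul_eq_zero.mp hfac with h | h
        · exact Or.inl h
        · exact Or.inr (sub_eq_zero.mp h)
      have hx : e.app x = c • 𝟙 (V.obj x) := by
        rw [happx, show ModuleCat.ofHom (c • (LinearMap.id : M →ₗ[k] M)) =
          c • 𝟙 (ModuleCat.of k M) from rfl]
        simp
      have hy : e.app y = c • 𝟙 (V.obj y) := by
        rw [happy, hc_eq_d, show ModuleCat.ofHom (d • (LinearMap.id : N →ₗ[k] N)) =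
          d • 𝟙 (ModuleCat.of k N) from rfl]
        simp
      have happ_all : ∀ z : C, e.app z = c • 𝟙 (V.obj z) := by
        intro z
        rcases hobj z with hσ | hσ
        · obtain ⟨σ⟩ := hσ
          have nat := e.naturality σ.hom
          rw [hx] at nat
          have h7 : e.app z ≫ V.map σ.hom = (c • 𝟙 (V.obj z)) ≫ V.map σ.hom := by
            rw [← nat]; simp
          exact (cancel_mono (V.map σ.hom)).mp h7
        · obtain ⟨σ⟩ := hσ
          have nat := e.naturality σ.hom
          rw [hy] at nat
          have h7 : e.app z ≫ V.map σ.hom = (c • 𝟙 (V.obj z)) ≫ V.map σ.hom := by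
            rw [← nat]; simp
          exact (cancel_mono (V.map σ.hom)).mp h7
      rcases hc01 with h0 | h1
      · left
        refine NatTrans.ext (funext fun z => ?_)
        simp [happ_all z, h0]
      · right
        refine NatTrans.ext (funext fun z => ?_)
        simp [happ_all z, h1]
  · -- isomorphism implies equal parameters
    rintro ⟨η⟩
    obtain ⟨c, d, hcx, hdy, hcd⟩ := scalar_components f₀ ρM ρN
      (Amat k M N bM bN (lam : k)) (Amat k M N bM bN (mu : k)) bM bN hdM1 hdN1
      hMsimple hNsimple exV eyV exW eyW hVg hVh hVf hWg hWh hWf η.hom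
    obtain ⟨hc_eq_d, hmul⟩ := coord c d (lam : k) (mu : k) hcd
    have hc0 : c ≠ 0 := by
      intro h0
      have hiso : IsIso (exV.inv ≫ η.hom.app x ≫ exW.hom) := inferInstance
      have hzero : exV.inv ≫ η.hom.app x ≫ exW.hom =
          ModuleCat.ofHom ((0 : k) • (LinearMap.id : M →ₗ[k] M)) := h0 ▸ hcx
      have hinv := IsIso.hom_inv_id (exV.inv ≫ η.hom.app x ≫ exW.hom)
      have h1 : ((exV.inv ≫ η.hom.app x ≫ exW.hom :
          ModuleCat.of k M ⟶ ModuleCat.of k M).hom : M →ₗ[k] M) (bM ⟨0, hdM0⟩) = 0 := by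
        rw [show ((exV.inv ≫ η.hom.app x ≫ exW.hom :
            ModuleCat.of k M ⟶ ModuleCat.of k M).hom : M →ₗ[k] M) =
            ((0 : k) • (LinearMap.id : M →ₗ[k] M)) from congrArg ModuleCat.Hom.hom hzero]
        simp only [zero_smul]
        rfl
      have h2 := LinearMap.congr_fun
        (show ((inv (exV.inv ≫ η.hom.app x ≫ exW.hom) :
            ModuleCat.of k M ⟶ ModuleCat.of k M).hom : M →ₗ[k] M) ∘ₗ
          ((exV.inv ≫ η.hom.app x ≫ exW.hom :
            ModuleCat.of k M ⟶ ModuleCat.of k M).hom : M →ₗ[k] M) = LinearMap.id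
          from congrArg ModuleCat.Hom.hom hinv) (bM ⟨0, hdM0⟩)
      rw [LinearMap.comp_apply, h1, map_zero] at h2
      exact hbM0 h2.symm
    have hd0 : d ≠ 0 := by rw [← hc_eq_d]; exact hc0
    have heq : (mu : k) = (lam : k) := by
      have h := hmul
      rw [hc_eq_d] at h
      exact mul_left_cancel₀ hd0 h
    exact (Units.ext heq).symm
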